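/- For any nondegenerate quadratic form Q on (ℤ/2)^(2m), the Gauss sum satisfies ∑_{x ∈ (ℤ/2)^(2m)} (-1)^(Q(x)) = (-1)^(Arf(Q)) · 2^m. In particular, |∑_x (-1)^(Q(x))| = 2^m. -/

import Mathlib

namespace Stmt14Aux

/-- The polarization of `Q`. -/
def B {n : ℕ} (Q : (Fin n → ZMod 2) → ZMod 2) (x y : Fin n → ZMod 2) : ZMod 2 :=
  Q (x + y) + Q x + Q y

variable {n : ℕ} {Q : (Fin n → ZMod 2) → ZMod 2}

lemma hQ0 (hB₂ : ∀ x y z, B Q x (y + z) = B Q x y + B Q x z) : Q 0 = 0 := by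
  have h := hB₂ 0 0 0
  simp only [B, add_zero] at h
  generalize Q 0 = u at h
  revert h; revert u; decide

lemma B_symm (x y : Fin n → ZMod 2) : B Q x y = B Q y x := by
  unfold B; rw [add_comm x y]; ring

lemma B_zero_right (hB₂ : ∀ x y z, B Q x (y + z) = B Q x y + B Q x z)
    (x : Fin n → ZMod 2) : B Q x 0 = 0 := by
  unfold B
  rw [add_zero, hQ0 hB₂]
  generalize Q x = u; revert u; decide

lemma B_sum_right (hB₂ : ∀ x y z, B Q x (y + z) = B Q x y + B Q x z)
    {ι : Type*} [DecidableEq ι] (x : Fin n → ZMod 2) (g : ι → Fin n → ZMod 2)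
    (s : Finset ι) : B Q x (∑ j ∈ s, g j) = ∑ j ∈ s, B Q x (g j) := by
  induction s using Finset.induction with
  | empty => simpa using B_zero_right hB₂ x
  | insert _ _ hj ih => rw [Finset.sum_insert hj, hB₂, ih, Finset.sum_insert hj]

lemma B_smul_right (hB₂ : ∀ x y z, B Q x (y + z) = B Q x y + B Q x z)
    (x y : Fin n → ZMod 2) (c : ZMod 2) : B Q x (c • y) = c * B Q x y := by
  have hc : c = 0 ∨ c = 1 := by revert c; decide
  rcases hc with rfl | rfl
  · rw [zero_smul, zero_mul]; exact B_zero_right hB₂ x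
  · rw [one_smul, one_mul]

lemma Q_add (x y : Fin n → ZMod 2) : Q (x + y) = Q x + Q y + B Q x y := by
  have h : ∀ u v w : ZMod 2, u = v + w + (u + v + w) := by decide
  exact h _ _ _

lemma chi_add : ∀ a c : ZMod 2,
    (-1 : ℤ) ^ ((a + c).val) = (-1 : ℤ) ^ a.val * (-1 : ℤ) ^ c.val := by decide

lemma chi_sum {ι : Type*} (t : ι → ZMod 2) (s : Finset ι) :
    (-1 : ℤ) ^ ((∑ j ∈ s, t j).val) = ∏ j ∈ s, (-1 : ℤ) ^ ((t j).val) := by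
  classical
  induction s using Finset.induction with
  | empty => simp
  | insert _ _ hj ih =>
      rw [Finset.sum_insert hj, Finset.prod_insert hj, chi_add, ih]

lemma cell_sum : ∀ q r : ZMod 2,
    (∑ p : ZMod 2 × ZMod 2, (-1 : ℤ) ^ ((p.1 * q + p.2 * r + p.1 * p.2).val))
      = 2 * (-1 : ℤ) ^ ((q * r).val) := by decide

end Stmt14Aux

open Stmt14Aux in
/-- For a nondegenerate quadratic form `Q` on `(ℤ/2)^(2m)` with symplectic basis
`b`, the Gauss sum equals `(-1)^(Arf Q) · 2^m`, and in particular has absolute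
value `2^m`. -/
theorem stmt14 (m : ℕ) (Q : (Fin (2 * m) → ZMod 2) → ZMod 2)
    (hB₁ : ∀ x y z : Fin (2 * m) → ZMod 2,
      Q (x + y + z) + Q (x + y) + Q z =
        (Q (x + z) + Q x + Q z) + (Q (y + z) + Q y + Q z))
    (hB₂ : ∀ x y z : Fin (2 * m) → ZMod 2,
      Q (x + (y + z)) + Q x + Q (y + z) =
        (Q (x + y) + Q x + Q y) + (Q (x + z) + Q x + Q z))
    (hnd : ∀ x : Fin (2 * m) → ZMod 2,
      (∀ y, Q (x + y) + Q x + Q y = 0) → x = 0)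
    (b : Module.Basis (Fin m ⊕ Fin m) (ZMod 2) (Fin (2 * m) → ZMod 2))
    (hb₁ : ∀ i j, Q (b (Sum.inl i) + b (Sum.inl j)) + Q (b (Sum.inl i)) +
      Q (b (Sum.inl j)) = 0)
    (hb₂ : ∀ i j, Q (b (Sum.inr i) + b (Sum.inr j)) + Q (b (Sum.inr i)) +
      Q (b (Sum.inr j)) = 0)
    (hb₃ : ∀ i j, Q (b (Sum.inl i) + b (Sum.inr j)) + Q (b (Sum.inl i)) +
      Q (b (Sum.inr j)) = if i = j then 1 else 0) :
    (∑ x : Fin (2 * m) → ZMod 2, (-1 : ℤ) ^ (Q x).val =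
      (-1 : ℤ) ^ ((∑ j : Fin m, Q (b (Sum.inl j)) * Q (b (Sum.inr j))).val) *
        2 ^ m) ∧
    |∑ x : Fin (2 * m) → ZMod 2, (-1 : ℤ) ^ (Q x).val| = 2 ^ m := by
  classical
  have hB₂' : ∀ x y z, B Q x (y + z) = B Q x y + B Q x z := hB₂
  -- notation for basis vectors
  set e : Fin m → Fin (2 * m) → ZMod 2 := fun j => b (Sum.inl j) with he
  set f : Fin m → Fin (2 * m) → ZMod 2 := fun j => b (Sum.inr j) with hf
  have hee : ∀ i j, B Q (e i) (e j) = 0 := hb₁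
  have hff : ∀ i j, B Q (f i) (f j) = 0 := hb₂
  have hef : ∀ i j, B Q (e i) (f j) = if i = j then 1 else 0 := hb₃
  -- value of Q on a single cell
  have hQv : ∀ (j : Fin m) (aj cj : ZMod 2),
      Q (aj • e j + cj • f j) = aj * Q (e j) + cj * Q (f j) + aj * cj := by
    intro j aj cj
    have h2 : ∀ u : ZMod 2, u = 0 ∨ u = 1 := by decide
    rcases h2 aj with rfl | rfl <;> rcases h2 cj with rfl | rfl
    · simpa using hQ0 hB₂'
    · simp
    · simp
    · have h := hef j j
      rw [if_pos rfl] at h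
      unfold B at h
      simp only [one_smul, one_mul]
      generalize Q (e j + f j) = u at h ⊢
      generalize Q (e j) = v at h ⊢
      generalize Q (f j) = w at h ⊢
      revert h; revert u v w; decide
  -- cross terms between distinct cells vanish
  have hBcell : ∀ (i j : Fin m) (x : Fin (2 * m) → ZMod 2) (aj cj : ZMod 2),
      i ≠ j → B Q x (e j) = 0 → B Q x (f j) = 0 →
        B Q x (aj • e j + cj • f j) = 0 := by
    intro i j x aj cj _ h1 h2
    rw [hB₂', B_smul_right hB₂', B_smul_right hB₂', h1, h2, mul_zero, mul_zero,
      add_zero]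
  have hBcross : ∀ (i j : Fin m), i ≠ j → ∀ (ai ci aj cj : ZMod 2),
      B Q (ai • e i + ci • f i) (aj • e j + cj • f j) = 0 := by
    intro i j hij ai ci aj cj
    refine hBcell i j _ aj cj hij ?_ ?_
    · rw [B_symm, hB₂', B_smul_right hB₂', B_smul_right hB₂', hee j i,
        hef j i, if_neg (Ne.symm hij), mul_zero, mul_zero, add_zero]
    · rw [B_symm, hB₂', B_smul_right hB₂', B_smul_right hB₂', hff j i,
        B_symm (f j) (e i), hef i j, if_neg hij, mul_zero, mul_zero, add_zero]
  -- main expansion over a Finset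
  have key : ∀ (a c : Fin m → ZMod 2) (s : Finset (Fin m)),
      Q (∑ j ∈ s, (a j • e j + c j • f j)) =
        ∑ j ∈ s, (a j * Q (e j) + c j * Q (f j) + a j * c j) := by
    intro a c s
    induction s using Finset.induction with
    | empty => simpa using hQ0 hB₂'
    | @insert j s hj ih =>
        rw [Finset.sum_insert hj, Finset.sum_insert hj, Q_add (Q := Q), ih, hQv]
        have hz : B Q (a j • e j + c j • f j)
            (∑ i ∈ s, (a i • e i + c i • f i)) = 0 := by
          rw [B_sum_right hB₂']
          refine Finset.sum_eq_zero fun i hi => ?_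
          exact hBcross j i (fun h => hj (h ▸ hi)) _ _ _ _
        rw [hz, add_zero]
  -- reindexing equivalence
  let E : ((Fin m → ZMod 2) × (Fin m → ZMod 2)) ≃ (Fin (2 * m) → ZMod 2) :=
    (Equiv.sumArrowEquivProdArrow (Fin m) (Fin m) (ZMod 2)).symm.trans
      b.equivFun.toEquiv.symm
  have hE : ∀ a c : Fin m → ZMod 2,
      E (a, c) = ∑ j : Fin m, (a j • e j + c j • f j) := by
    intro a c
    show b.equivFun.symm (Sum.elim a c) = _
    rw [Module.Basis.equivFun_symm_apply, Fintype.sum_sum_type]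
    simp only [Sum.elim_inl, Sum.elim_inr]
    rw [← Finset.sum_add_distrib]
  -- compute the Gauss sum
  have main : ∑ x : Fin (2 * m) → ZMod 2, (-1 : ℤ) ^ (Q x).val =
      (-1 : ℤ) ^ ((∑ j : Fin m, Q (e j) * Q (f j)).val) * 2 ^ m := by
    rw [← Equiv.sum_comp E (fun x => (-1 : ℤ) ^ (Q x).val)]
    rw [← Equiv.sum_comp (Equiv.arrowProdEquivProdArrow (Fin m) (fun _ => ZMod 2) (fun _ => ZMod 2))
      (fun p => (-1 : ℤ) ^ (Q (E p)).val)]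
    have step : ∀ h : Fin m → ZMod 2 × ZMod 2,
        (-1 : ℤ) ^ (Q (E (Equiv.arrowProdEquivProdArrow _ _ _ h))).val =
          ∏ j : Fin m, (-1 : ℤ) ^
            (((h j).1 * Q (e j) + (h j).2 * Q (f j) + (h j).1 * (h j).2).val) := by
      intro h
      have : E (Equiv.arrowProdEquivProdArrow _ _ _ h) =
          ∑ j : Fin m, ((h j).1 • e j + (h j).2 • f j) := hE _ _
      rw [this, key, chi_sum]
    rw [Finset.sum_congr rfl (fun h _ => step h)]
    rw [← Fintype.prod_sum
      (fun j (p : ZMod 2 × ZMod 2) =>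
        (-1 : ℤ) ^ ((p.1 * Q (e j) + p.2 * Q (f j) + p.1 * p.2).val))]
    have : ∀ j : Fin m, (∑ p : ZMod 2 × ZMod 2,
        (-1 : ℤ) ^ ((p.1 * Q (e j) + p.2 * Q (f j) + p.1 * p.2).val)) =
          2 * (-1 : ℤ) ^ ((Q (e j) * Q (f j)).val) := fun j => cell_sum _ _
    rw [Finset.prod_congr rfl (fun j _ => this j), Finset.prod_mul_distrib,
      Finset.prod_const, ← chi_sum, Finset.card_univ, Fintype.card_fin, mul_comm]
  refine ⟨main, ?_⟩
  rw [main, abs_mul, abs_pow, abs_pow, abs_neg, abs_one, one_pow, one_mul,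
    abs_two]
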